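/- arXiv:1712.03196 — 3 statements merged into one kernel-verified Lean document; each statement's English description precedes it below -/
import Mathlib

section
/- If Ω is a right adjoint to a graph functor that is itself a right adjoint, and K is a multiplicative graph, then Ω(K) is multiplicative. -/
/-- A finite graph: symmetric edge relation, loops allowed. -/
structure LoopGraph where
  V : Type
  Adj : V → V → Prop
  symm : ∀ {u v : V}, Adj u v → Adj v u
  [fin : Finite V]

attribute [instance] LoopGraph.fin

/-- Existence of a graph homomorphism. -/
def LoopGraph.Hom (G H : LoopGraph) : Prop :=
  ∃ f : G.V → H.V, ∀ {u v : G.V}, G.Adj u v → H.Adj (f u) (f v)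

/-- Homomorphic equivalence. -/
def LoopGraph.HomEquiv (G H : LoopGraph) : Prop := G.Hom H ∧ H.Hom G

/-- Tensor (categorical) product of graphs. -/
def LoopGraph.prod (G H : LoopGraph) : LoopGraph where
  V := G.V × H.V
  Adj := fun a b => G.Adj a.1 b.1 ∧ H.Adj a.2 b.2
  symm := fun h => ⟨G.symm h.1, H.symm h.2⟩

/-- A walk of length `n` from `u` to `v`. -/
def LoopGraph.Walk (G : LoopGraph) (n : ℕ) (u v : G.V) : Prop :=
  ∃ w : ℕ → G.V, w 0 = u ∧ w n = v ∧ ∀ i < n, G.Adj (w i) (w (i+1))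

/-- The `k`-th power graph `Γ_k(G)`. -/
def LoopGraph.pow (G : LoopGraph) (k : ℕ) : LoopGraph where
  V := G.V
  Adj := fun u v => G.Walk k u v
  symm := by
    rintro u v ⟨w, h0, hk, hadj⟩
    refine ⟨fun i => w (k - i), by simpa using hk, by simpa using h0, fun i hi => ?_⟩
    have h1 : k - (i+1) + 1 = k - i := by omega
    have h2 := hadj (k - (i+1)) (by omega)
    rw [h1] at h2
    exact G.symm h2

/-- Raw vertices for the `k`-subdivision: original vertices plus internal path
vertices `(u,v,i)` with `uv` an edge and `0 < i < k`. -/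
abbrev LoopGraph.SubdivRaw (G : LoopGraph) (k : ℕ) : Type :=
  G.V ⊕ {p : G.V × G.V × Fin (k+1) // G.Adj p.1 p.2.1 ∧ 0 < p.2.2.val ∧ p.2.2.val < k}

/-- Identification `(u,v,i) ~ (v,u,k-i)` of internal vertices. -/
def LoopGraph.subdivRel (G : LoopGraph) (k : ℕ) : G.SubdivRaw k → G.SubdivRaw k → Prop :=
  fun a b => ∃ p q, a = Sum.inr p ∧ b = Sum.inr q ∧
    p.1.1 = q.1.2.1 ∧ p.1.2.1 = q.1.1 ∧ p.1.2.2.val + q.1.2.2.val = k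

/-- Adjacency on raw subdivision vertices. -/
def LoopGraph.subdivAdjRaw (G : LoopGraph) (k : ℕ) : G.SubdivRaw k → G.SubdivRaw k → Prop := fun a b =>
  match a, b with
  | .inl u, .inl v => k = 1 ∧ G.Adj u v
  | .inl u, .inr p => (p.1.1 = u ∧ p.1.2.2.val = 1) ∨ (p.1.2.1 = u ∧ p.1.2.2.val = k - 1)
  | .inr p, .inl u => (p.1.1 = u ∧ p.1.2.2.val = 1) ∨ (p.1.2.1 = u ∧ p.1.2.2.val = k - 1)
  | .inr p, .inr q =>
      (p.1.1 = q.1.1 ∧ p.1.2.1 = q.1.2.1 ∧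
        (p.1.2.2.val + 1 = q.1.2.2.val ∨ q.1.2.2.val + 1 = p.1.2.2.val)) ∨
      (p.1.1 = q.1.2.1 ∧ p.1.2.1 = q.1.1 ∧
        (p.1.2.2.val + q.1.2.2.val = k + 1 ∨ p.1.2.2.val + q.1.2.2.val = k - 1))

/-- The `k`-subdivision `Λ_k(G)`: every edge replaced by a path with `k` edges. -/
def LoopGraph.subdiv (G : LoopGraph) (k : ℕ) : LoopGraph where
  V := Quot (G.subdivRel k)
  Adj := fun x y => ∃ a b, Quot.mk _ a = x ∧ Quot.mk _ b = y ∧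
    (G.subdivAdjRaw k a b ∨ G.subdivAdjRaw k b a)
  symm := fun ⟨a, b, ha, hb, h⟩ => ⟨b, a, hb, ha, h.symm⟩

/-- `A` joined to `B`: every vertex of `A` adjacent to every vertex of `B`. -/
def LoopGraph.Join (G : LoopGraph) (A B : Set G.V) : Prop := ∀ a ∈ A, ∀ b ∈ B, G.Adj a b

/-- Vertices of `Ω_{2ℓ+1}(G)`: tuples `(A_0, …, A_ℓ)` of vertex subsets with `A_0`
a singleton and `A_{i-1}` joined to `A_i`. -/
abbrev LoopGraph.OmegaVert (G : LoopGraph) (l : ℕ) : Type :=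
  {A : Fin (l+1) → Set G.V //
    (∃ v, A 0 = {v}) ∧ ∀ i : Fin l, G.Join (A i.castSucc) (A i.succ)}

/-- The graph `Ω_{2ℓ+1}(G)`, right adjoint to the `(2ℓ+1)`-st power functor. -/
def LoopGraph.omega (G : LoopGraph) (l : ℕ) : LoopGraph where
  V := G.OmegaVert l
  Adj := fun A B =>
    (∀ i : Fin l, A.1 i.castSucc ⊆ B.1 i.succ ∧ B.1 i.castSucc ⊆ A.1 i.succ) ∧
    G.Join (A.1 (Fin.last l)) (B.1 (Fin.last l))
  symm := fun {A B} h =>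
    ⟨fun i => ⟨(h.1 i).2, (h.1 i).1⟩, fun b hb a ha => G.symm (h.2 a ha b hb)⟩

/-- A multiplicative graph. -/
def LoopGraph.Multiplicative (K : LoopGraph) : Prop :=
  ∀ G H : LoopGraph, (G.prod H).Hom K → G.Hom K ∨ H.Hom K

/-- A (thin) graph functor. -/
def IsGraphFunctor (F : LoopGraph → LoopGraph) : Prop :=
  ∀ G H : LoopGraph, G.Hom H → (F G).Hom (F H)


theorem LoopGraph.Hom.comp {G H K : LoopGraph} (h1 : G.Hom H) (h2 : H.Hom K) : G.Hom K := by
  obtain ⟨f, hf⟩ := h1; obtain ⟨g, hg⟩ := h2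
  exact ⟨g ∘ f, fun h => hg (hf h)⟩

theorem LoopGraph.prod_fst (G H : LoopGraph) : (G.prod H).Hom G :=
  ⟨Prod.fst, fun h => h.1⟩

theorem LoopGraph.prod_snd (G H : LoopGraph) : (G.prod H).Hom H :=
  ⟨Prod.snd, fun h => h.2⟩

theorem LoopGraph.Hom.pair {X G H : LoopGraph} (h1 : X.Hom G) (h2 : X.Hom H) :
    X.Hom (G.prod H) := by
  obtain ⟨f, hf⟩ := h1; obtain ⟨g, hg⟩ := h2
  exact ⟨fun v => (f v, g v), fun h => ⟨hf h, hg h⟩⟩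

/-- a right adjoint of a right adjoint preserves multiplicativity. -/
theorem right_adjoint_of_right_adjoint_multiplicative (Λ Γ Ω : LoopGraph → LoopGraph)
    (hΛ : IsGraphFunctor Λ) (hΓ : IsGraphFunctor Γ) (hΩ : IsGraphFunctor Ω)
    (hadj1 : ∀ G H : LoopGraph, (Λ G).Hom H ↔ G.Hom (Γ H))
    (hadj2 : ∀ G H : LoopGraph, (Γ G).Hom H ↔ G.Hom (Ω H))
    (K : LoopGraph) (hK : K.Multiplicative) :
    (Ω K).Multiplicative := by
  intro G H hGH
  have hΓK : (Γ (G.prod H)).Hom K := (hadj2 _ _).2 hGH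
  set X := (Γ G).prod (Γ H) with hX
  have hXG : (Λ X).Hom G := (hadj1 _ _).2 (LoopGraph.prod_fst _ _)
  have hXH : (Λ X).Hom H := (hadj1 _ _).2 (LoopGraph.prod_snd _ _)
  have hXK : X.Hom K :=
    ((hadj1 _ _).1 (hXG.pair hXH)).comp hΓK
  rcases hK _ _ hXK with h | h
  · exact Or.inl ((hadj2 _ _).1 h)
  · exact Or.inr ((hadj2 _ _).1 h)
end

section
/- The k-th power functor Γ_k is left adjoint to Ω_k for odd k = 2ℓ+1: for all graphs G, H, there is a homomorphism Γ_k(G) → H if and only if there is a homomorphism G → Ω_k(H). -/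
lemma LoopGraph.Walk.symm' {G : LoopGraph} {n : ℕ} {u v : G.V} (h : G.Walk n u v) :
    G.Walk n v u := (G.pow n).symm h

lemma LoopGraph.walk_zero {G : LoopGraph} {u v : G.V} : G.Walk 0 u v ↔ u = v := by
  constructor
  · rintro ⟨w, h0, hE, _⟩; rw [← h0, hE]
  · rintro rfl; exact ⟨fun _ => u, rfl, rfl, fun i hi => absurd hi (by omega)⟩

lemma LoopGraph.walk_one {G : LoopGraph} {u v : G.V} (h : G.Adj u v) : G.Walk 1 u v := by
  refine ⟨fun i => if i = 0 then u else v, by simp, by simp, fun i hi => ?_⟩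
  have : i = 0 := by omega
  simp [this, h]

lemma LoopGraph.Walk.append {G : LoopGraph} {m n : ℕ} {u v x : G.V}
    (h1 : G.Walk m u v) (h2 : G.Walk n v x) : G.Walk (m+n) u x := by
  obtain ⟨w1, h10, h1m, h1a⟩ := h1
  obtain ⟨w2, h20, h2n, h2a⟩ := h2
  refine ⟨fun i => if i ≤ m then w1 i else w2 (i - m), by simp [h10], ?_, fun i hi => ?_⟩
  · by_cases h : m + n ≤ m
    · have hn : n = 0 := by omega
      simp only [h, if_pos]
      rw [show m + n = m by omega, h1m, ← h2n, hn]
      exact h20.symm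
    · have h2 : m + n - m = n := by omega
      simp [h, h2, h2n]
  · rcases Nat.lt_trichotomy i m with hlt | heq | hgt
    · have h1 : i ≤ m := by omega
      by_cases h2 : i + 1 ≤ m
      · simpa [h1, h2] using h1a i hlt
      · have : i + 1 = m := by omega
        simp only [h1, if_pos, h2, if_neg]
        rw [show i + 1 - m = 0 by omega, h20, ← h1m, ← this]
        exact h1a i hlt
    · subst heq
      have h2 : ¬ (i + 1 ≤ i) := by omega
      simp only [le_refl, if_pos, h2, if_neg]
      rw [h1m, ← h20, show i + 1 - i = 1 by omega]
      exact h2a 0 (by omega)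
    · have h1 : ¬ (i ≤ m) := by omega
      have h2 : ¬ (i + 1 ≤ m) := by omega
      simp only [h1, if_neg, h2]
      rw [show i + 1 - m = (i - m) + 1 by omega]
      exact h2a (i - m) (by omega)

lemma LoopGraph.walk_pad {G : LoopGraph} {v z : G.V} (h : G.Adj v z) (m : ℕ) :
    G.Walk (2*m) v v := by
  refine ⟨fun i => if i % 2 = 0 then v else z, by simp, by simp [Nat.mul_mod_right], fun i hi => ?_⟩
  by_cases h2 : i % 2 = 0
  · have h3 : ¬ ((i+1) % 2 = 0) := by omega
    simp only [h2, if_pos, h3, if_neg]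
    exact h
  · have h3 : (i+1) % 2 = 0 := by omega
    simp only [h2, if_neg, h3, if_pos]
    exact G.symm h

lemma LoopGraph.Walk.cast {G : LoopGraph} {m n : ℕ} {u v : G.V} (h : G.Walk m u v)
    (hmn : m = n) : G.Walk n u v := hmn ▸ h

/-- the power functor `Γ_{2ℓ+1}` is left adjoint to `Ω_{2ℓ+1}`. -/
theorem pow_omega_adjoint (l : ℕ) (G H : LoopGraph) :
    (G.pow (2*l+1)).Hom H ↔ G.Hom (H.omega l) := by
  constructor
  · rintro ⟨f, hf⟩
    refine ⟨fun u => ⟨fun i => f '' {x | G.Walk i.val u x}, ⟨f u, ?_⟩, fun i => ?_⟩, ?_⟩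
    · ext y
      simp only [Set.mem_image, Set.mem_setOf_eq, Set.mem_singleton_iff]
      constructor
      · rintro ⟨x, hx, rfl⟩
        rw [(LoopGraph.walk_zero.mp hx)]
      · rintro rfl; exact ⟨u, LoopGraph.walk_zero.mpr rfl, rfl⟩
    · rintro a ⟨x, hx, rfl⟩ b ⟨y, hy, rfl⟩
      simp only [Fin.coe_castSucc, Set.mem_setOf_eq, Fin.val_succ] at hx hy
      -- y has a neighbor
      obtain ⟨w, hw0, hwE, hwa⟩ := hy
      have hnb : G.Adj y (w i.val) := by
        have := hwa i.val (by omega)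
        rw [hwE] at this
        exact G.symm this
      have hwalk : G.Walk (2*l+1) x y := by
        have := (hx.symm'.append ⟨w, hw0, hwE, hwa⟩).append (G.walk_pad hnb (l - i.val))
        exact this.cast (by have := i.isLt; omega)
      exact hf hwalk
    · intro u v huv
      constructor
      · intro i
        constructor
        · rintro a ⟨x, hx, rfl⟩
          exact ⟨x, ((G.walk_one (G.symm huv)).append hx).cast (by simp [Nat.add_comm]), rfl⟩
        · rintro a ⟨x, hx, rfl⟩
          exact ⟨x, ((G.walk_one huv).append hx).cast (by simp [Nat.add_comm]), rfl⟩
      · rintro a ⟨x, hx, rfl⟩ b ⟨y, hy, rfl⟩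
        simp only [Fin.val_last, Set.mem_setOf_eq] at hx hy
        have hwalk : G.Walk (2*l+1) x y :=
          ((hx.symm'.append (G.walk_one huv)).append hy).cast (by omega)
        exact hf hwalk
  · rintro ⟨g, hg⟩
    choose v0 hv0 using fun u => (g u).2.1
    refine ⟨v0, ?_⟩
    rintro u u' ⟨w, h0, hE, ha⟩
    -- step lemma
    have step : ∀ (a b : G.V), G.Adj a b → ∀ j (hj : j < l) (x : H.V),
        x ∈ (g a).1 ⟨j, by omega⟩ → x ∈ (g b).1 ⟨j+1, by omega⟩ := by
      intro a b hab j hj x hx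
      exact ((hg hab).1 ⟨j, hj⟩).1 hx
    have fwd : ∀ j (hj : j ≤ l), v0 u ∈ (g (w j)).1 ⟨j, by omega⟩ := by
      intro j
      induction j with
      | zero => intro _; rw [h0, Fin.mk_zero, hv0 u]; rfl
      | succ j ih =>
        intro hj
        exact step (w j) (w (j+1)) (ha j (by omega)) j (by omega) _ (ih (by omega))
    have bwd : ∀ j (hj : j ≤ l), v0 u' ∈ (g (w (2*l+1-j))).1 ⟨j, by omega⟩ := by
      intro j
      induction j with
      | zero => intro _; simp only [Nat.sub_zero]; rw [hE, Fin.mk_zero, hv0 u']; rfl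
      | succ j ih =>
        intro hj
        have hedge : G.Adj (w (2*l+1-j)) (w (2*l+1-(j+1))) := by
          have := ha (2*l-j) (by omega)
          rw [show 2*l-j+1 = 2*l+1-j by omega] at this
          have h2 : 2*l+1-(j+1) = 2*l-j := by omega
          rw [h2]
          exact G.symm this
        exact step _ _ hedge j (by omega) _ (ih (by omega))
    have h1 := fwd l le_rfl
    have h2 := bwd l le_rfl
    rw [show 2*l+1-l = l+1 by omega] at h2
    have hedge : G.Adj (w l) (w (l+1)) := ha l (by omega)
    exact (hg hedge).2 (v0 u) h1 (v0 u') h2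
end

section
/- For a Z/2-space X, there exists a Z/2-equivariant continuous map from the circle S^1 (with antipodal involution) to X if and only if X does not admit a Z/2-equivariant continuous map to S^0 = {-1,1} (with the swap involution). Here existence of a path from some point x to its involution image ν(x) is the intermediate characterization. -/
/-- A `ℤ/2`-space: a topological space with a continuous involution. -/
structure Z2Space where
  carrier : Type
  [top : TopologicalSpace carrier]
  ν : carrier → carrier
  cont : Continuous ν
  invol : ∀ x, ν (ν x) = x

attribute [instance] Z2Space.top

/-- A free `ℤ/2`-space: the involution has no fixed points. -/
def Z2Space.Free (X : Z2Space) : Prop := ∀ x, X.ν x ≠ x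

/-- Existence of a `ℤ/2`-equivariant continuous map. -/
def Z2Map (X Y : Z2Space) : Prop :=
  ∃ f : X.carrier → Y.carrier, Continuous f ∧ ∀ x, f (X.ν x) = Y.ν (f x)

/-- Product of `ℤ/2`-spaces, with the diagonal involution. -/
def Z2Space.prod (X Y : Z2Space) : Z2Space where
  carrier := X.carrier × Y.carrier
  ν := fun p => (X.ν p.1, Y.ν p.2)
  cont := (X.cont.comp continuous_fst).prodMk (Y.cont.comp continuous_snd)
  invol := fun p => by simp [X.invol, Y.invol]

/-- The 0-sphere `S⁰ = {-1, 1} ⊆ ℝ` with the involution `x ↦ -x`. -/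
noncomputable def S0 : Z2Space where
  carrier := {x : ℝ // x = -1 ∨ x = 1}
  ν := fun x => ⟨-x.1, by rcases x.2 with h | h <;> simp [h]⟩
  cont := Continuous.subtype_mk (continuous_neg.comp continuous_subtype_val)
    (fun x => by rcases x.2 with h | h <;> simp [h])
  invol := fun x => Subtype.ext (neg_neg _)

/-- The circle `S¹`: the unit sphere in the Euclidean plane with the antipodal
involution `x ↦ -x`. -/
noncomputable def S1 : Z2Space where
  carrier := {x : EuclideanSpace ℝ (Fin 2) // ‖x‖ = 1}
  ν := fun x => ⟨-x.1, by rw [norm_neg]; exact x.2⟩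
  cont := Continuous.subtype_mk (continuous_neg.comp continuous_subtype_val)
    (fun x => by simp [x.2])
  invol := fun x => Subtype.ext (neg_neg _)

/-! ### Auxiliary lemmas -/

/-- `Joined` is functorial along continuous maps. -/
private lemma joined_map {A B : Type} [TopologicalSpace A] [TopologicalSpace B]
    {a b : A} (h : Joined a b) {f : A → B} (hf : Continuous f) : Joined (f a) (f b) :=
  ⟨h.somePath.map hf⟩

private lemma coord_sq (v : EuclideanSpace ℝ (Fin 2)) (h : ‖v‖ = 1) :
    v 0 ^ 2 + v 1 ^ 2 = 1 := by
  have hn := EuclideanSpace.norm_eq v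
  rw [h] at hn
  have h2 : (∑ i, ‖v i‖ ^ 2) = 1 := Real.sqrt_eq_one.mp hn.symm
  simpa [Fin.sum_univ_two, sq_abs, Real.norm_eq_abs] using h2

private lemma coord_pm (v : EuclideanSpace ℝ (Fin 2)) (h : ‖v‖ = 1) (h1 : v 1 = 0) :
    v 0 = 1 ∨ v 0 = -1 := by
  have hs := coord_sq v h
  rw [h1] at hs
  have hz : (v 0 - 1) * (v 0 + 1) = 0 := by nlinarith
  rcases mul_eq_zero.mp hz with h' | h'
  · left; linarith
  · right; linarith

/-- If some point is joined to its involution image, wrap the path around `S¹`. -/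
private lemma exists_to_map {X : Z2Space} (h : ∃ x, Joined x (X.ν x)) : Z2Map S1 X := by
  obtain ⟨x, ⟨γ⟩⟩ := h
  set E : ℝ → X.carrier := fun a => γ.extend (Real.arccos a / Real.pi) with hE
  have hEcont : Continuous E := γ.continuous_extend.comp (Real.continuous_arccos.div_const _)
  have hE1 : E 1 = x := by simp [hE, Real.arccos_one]
  have hEm1 : E (-1) = X.ν x := by
    simp [hE, Real.arccos_neg_one, div_self Real.pi_ne_zero]
  have key : ∀ a : ℝ, a = 1 ∨ a = -1 → E (-a) = X.ν (E a) := by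
    rintro a (rfl | rfl)
    · rw [hE1, hEm1]
    · rw [neg_neg, hE1, hEm1, X.invol]
  refine ⟨fun v => if (0:ℝ) ≤ v.1 1 then E (v.1 0) else X.ν (E (-(v.1 0))), ?_, ?_⟩
  · apply Continuous.if_le
    · exact hEcont.comp ((PiLp.continuous_apply 2 _ (0 : Fin 2)).comp continuous_subtype_val)
    · exact X.cont.comp (hEcont.comp
        (((PiLp.continuous_apply 2 _ (0 : Fin 2)).comp continuous_subtype_val).neg))
    · exact continuous_const
    · exact (PiLp.continuous_apply 2 _ (1 : Fin 2)).comp continuous_subtype_val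
    · intro v hv
      have hpm : -(v.1 0) = 1 ∨ -(v.1 0) = -1 := by
        rcases coord_pm v.1 v.2 hv.symm with h0 | h0
        · right; rw [h0]
        · left; rw [h0]; ring
      have := key (-(v.1 0)) hpm
      rw [neg_neg] at this
      rw [this]
  · intro v
    have hco0 : (S1.ν v).1 0 = -(v.1 0) := rfl
    have hco1 : (S1.ν v).1 1 = -(v.1 1) := rfl
    simp only [hco0, hco1]
    rcases lt_trichotomy 0 (v.1 1) with hb | hb | hb
    · rw [if_neg (by linarith), if_pos (le_of_lt hb), neg_neg]
    · rw [if_pos (by linarith), if_pos (by linarith)]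
      exact key (v.1 0) (coord_pm v.1 v.2 hb.symm)
    · rw [if_pos (by linarith), if_neg (by linarith), X.invol]

/-- A `ℤ/2`-map from the circle yields a point joined to its involution image. -/
private lemma map_to_exists {X : Z2Space} (h : Z2Map S1 X) :
    ∃ x : X.carrier, Joined x (X.ν x) := by
  obtain ⟨f, hf, hfe⟩ := h
  set c : ℝ → EuclideanSpace ℝ (Fin 2) :=
    fun t => WithLp.toLp 2 (fun i => if i = 0 then Real.cos (Real.pi * t) else Real.sin (Real.pi * t)) with hc
  have hnorm : ∀ t, ‖c t‖ = 1 := by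
    intro t
    rw [EuclideanSpace.norm_eq]
    have : (∑ i, ‖c t i‖ ^ 2) = 1 := by
      simp [hc, Fin.sum_univ_two, Real.norm_eq_abs, sq_abs,
        Real.cos_sq_add_sin_sq]
    rw [this, Real.sqrt_one]
  have hccont : Continuous c := by
    apply (PiLp.continuous_toLp 2 _).comp
    apply continuous_pi
    intro i
    simp only [hc]
    fin_cases i <;> simp <;> fun_prop
  set p : S1.carrier := ⟨c 0, hnorm 0⟩ with hp
  have htarget : c 1 = -(c 0) := by
    ext i
    fin_cases i <;> simp [hc]
  have P : Path p (S1.ν p) := by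
    refine ⟨⟨fun t => ⟨c t, hnorm t⟩, ?_⟩, ?_, ?_⟩
    · exact (hccont.comp continuous_subtype_val).subtype_mk _
    · exact Subtype.ext (by simp; rfl)
    · exact Subtype.ext (by exact htarget)
  have hJ : Joined (f p) (f (S1.ν p)) := ⟨P.map hf⟩
  rw [hfe] at hJ
  exact ⟨f p, hJ⟩

/-- A `ℤ/2`-map to `S⁰` forbids any point being joined to its image (IVT). -/
private lemma map_S0_no_exists {X : Z2Space} (h : Z2Map X S0) :
    ¬ ∃ x : X.carrier, Joined x (X.ν x) := by
  obtain ⟨f, hf, hfe⟩ := h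
  rintro ⟨x, ⟨γ⟩⟩
  set H : ℝ → ℝ := fun t => (f (γ.extend t)).1 with hH
  have hHcont : Continuous H :=
    continuous_subtype_val.comp (hf.comp γ.continuous_extend)
  have h0 : H 0 = (f x).1 := by simp [hH]
  have h1 : H 1 = -((f x).1) := by
    have : γ.extend 1 = X.ν x := γ.extend_one
    simp only [hH, this, hfe]
    rfl
  have hiv : ∃ t ∈ Set.Icc (0:ℝ) 1, H t = 0 := by
    rcases (f x).2 with hv | hv
    · have hsub := intermediate_value_Icc (by norm_num : (0:ℝ) ≤ 1) hHcont.continuousOn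
      have : (0:ℝ) ∈ Set.Icc (H 0) (H 1) := by rw [h0, h1, hv]; norm_num
      obtain ⟨t, ht, htv⟩ := hsub this
      exact ⟨t, ht, htv⟩
    · have hsub := intermediate_value_Icc' (by norm_num : (0:ℝ) ≤ 1) hHcont.continuousOn
      have : (0:ℝ) ∈ Set.Icc (H 1) (H 0) := by rw [h0, h1, hv]; norm_num
      obtain ⟨t, ht, htv⟩ := hsub this
      exact ⟨t, ht, htv⟩
  obtain ⟨t, _, htv⟩ := hiv
  rcases (f (γ.extend t)).2 with hv | hv <;> rw [hH] at htv <;>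
    simp only [hv] at htv <;> norm_num at htv

/-- If no point is joined to its image, classes of path components paired by the
involution can be consistently labelled by `±1`, giving a `ℤ/2`-map to `S⁰`. -/
private lemma no_exists_map_S0 {X : Z2Space} [LocallyPathConnectedSpace X.carrier]
    (h : ¬ ∃ x : X.carrier, Joined x (X.ν x)) : Z2Map X S0 := by
  push_neg at h
  classical
  have hsymm2 : ∀ a b : X.carrier, Joined a (X.ν b) → Joined b (X.ν a) := by
    intro a b hab
    have := joined_map hab X.cont
    rw [X.invol] at this
    exact this.symm
  let s : Setoid X.carrier :=
    ⟨fun a b => Joined a b ∨ Joined a (X.ν b), by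
      refine ⟨fun a => Or.inl (Joined.refl a), ?_, ?_⟩
      · rintro a b (hab | hab)
        · exact Or.inl hab.symm
        · exact Or.inr (hsymm2 a b hab)
      · rintro a b c (hab | hab) (hbc | hbc)
        · exact Or.inl (hab.trans hbc)
        · exact Or.inr (hab.trans hbc)
        · refine Or.inr (hab.trans ?_)
          exact joined_map hbc X.cont
        · refine Or.inl (hab.trans ?_)
          have := joined_map hbc X.cont
          rw [X.invol] at this
          exact this⟩
  let g : X.carrier → ℝ := fun x => if Joined x (Quotient.mk s x).out then 1 else -1
  have hgconst : ∀ a b : X.carrier, Joined a b → g a = g b := by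
    intro a b hab
    have hq : (Quotient.mk s a) = (Quotient.mk s b) := Quotient.sound (Or.inl hab)
    show (if Joined a (Quotient.mk s a).out then (1:ℝ) else -1)
       = (if Joined b (Quotient.mk s b).out then (1:ℝ) else -1)
    rw [hq]
    by_cases hj : Joined b (Quotient.mk s b).out
    · rw [if_pos hj, if_pos (hab.trans hj)]
    · rw [if_neg hj, if_neg (fun hj' => hj (hab.symm.trans hj'))]
  have hgnu : ∀ x : X.carrier, g (X.ν x) = -(g x) := by
    intro x
    have hq : (Quotient.mk s (X.ν x)) = (Quotient.mk s x) := by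
      apply Quotient.sound
      right
      exact Joined.refl _
    set y := (Quotient.mk s x).out with hy
    have hrel : Joined x y ∨ Joined x (X.ν y) := Setoid.symm (Quotient.mk_out (s := s) x)
    show (if Joined (X.ν x) (Quotient.mk s (X.ν x)).out then (1:ℝ) else -1)
       = -(if Joined x (Quotient.mk s x).out then (1:ℝ) else -1)
    rw [hq]
    by_cases hj : Joined x y
    · rw [if_pos hj, if_neg (fun hj' => h x (hj.trans hj'.symm))]
    · have hj2 : Joined x (X.ν y) := hrel.resolve_left hj
      have hj3 : Joined (X.ν x) y := by
        have := joined_map hj2 X.cont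
        rw [X.invol] at this
        exact this
      rw [if_pos hj3, if_neg hj]
      norm_num
  have hloc : IsLocallyConstant g := by
    rw [IsLocallyConstant.iff_exists_open]
    intro x
    exact ⟨pathComponent x, IsOpen.pathComponent x, mem_pathComponent_self x,
      fun y hy => hgconst y x hy.symm⟩
  have hgval : ∀ x : X.carrier, g x = -1 ∨ g x = 1 := by
    intro x
    show (if Joined x (Quotient.mk s x).out then (1:ℝ) else -1) = -1 ∨
         (if Joined x (Quotient.mk s x).out then (1:ℝ) else -1) = 1
    by_cases hj : Joined x (Quotient.mk s x).out
    · right; rw [if_pos hj]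
    · left; rw [if_neg hj]
  refine ⟨fun x => ⟨g x, hgval x⟩, hloc.continuous.subtype_mk _, ?_⟩
  intro x
  exact Subtype.ext (hgnu x)

/-- for a `ℤ/2`-space `X` (a realization of a finite simplicial
complex, so in particular locally path-connected), there is a `ℤ/2`-map
`S¹ → X` iff `X` admits no `ℤ/2`-map to `S⁰`; the intermediate characterization
is the existence of a path from some point `x` to `ν x`. -/
theorem z2map_circle_iff_no_z2map_S0 (X : Z2Space)
    (hX : LocPathConnectedSpace X.carrier) :
    (Z2Map S1 X ↔ ¬ Z2Map X S0) ∧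
    (Z2Map S1 X ↔ ∃ x : X.carrier, Joined x (X.ν x)) := by
  haveI : LocallyPathConnectedSpace X.carrier := hX
  constructor
  · constructor
    · intro h1 h2
      exact map_S0_no_exists h2 (map_to_exists h1)
    · intro h2
      apply exists_to_map
      by_contra hne
      exact h2 (no_exists_map_S0 hne)
  · exact ⟨map_to_exists, exists_to_map⟩
end
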